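/- The 3-element chain (the linearly ordered lattice with exactly three elements) is not isomorphic to the lattice of flats of any boolean representable finite simplicial complex, whereas every lattice with at most 2 elements is isomorphic to the lattice of flats of some boolean representable finite simplicial complex. -/

import Mathlib

universe u v

/-- `F ⊆ V` is a flat of the simplicial complex `(V, H)`: for every `I ∈ H` with
`I ⊆ F` and every `p ∈ V \ F`, `I ∪ {p} ∈ H`. -/
def IsCFlat {α : Type u} (V : Set α) (H : Set (Set α)) (F : Set α) : Prop :=
  F ⊆ V ∧ ∀ I ∈ H, I ⊆ F → ∀ p ∈ V \ F, insert p I ∈ H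

/-- `(V, H)` is a finite simplicial complex: `V` is finite and nonempty, and
`H ⊆ 2^V` is nonempty and closed under taking subsets. -/
def IsCpx {α : Type u} (V : Set α) (H : Set (Set α)) : Prop :=
  V.Finite ∧ V.Nonempty ∧ H.Nonempty ∧ (∀ X ∈ H, X ⊆ V) ∧ ∀ X ∈ H, ∀ Y ⊆ X, Y ∈ H

/-- `X` is a transversal of the successive differences for some chain
`F 0 ⊂ F 1 ⊂ … ⊂ F k` of flats of `(V, H)`: `X` admits an enumeration
`x 0, …, x (k-1)` with `x i ∈ F (i+1) \ F i`. -/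
def TransvSD {α : Type u} (V : Set α) (H : Set (Set α)) (X : Set α) : Prop :=
  ∃ (k : ℕ) (F : Fin (k + 1) → Set α) (x : Fin k → α),
    (∀ i, IsCFlat V H (F i)) ∧ StrictMono F ∧
    Function.Injective x ∧ X = Set.range x ∧
    ∀ i : Fin k, x i ∈ F i.succ \ F i.castSucc

/-- `(V, H)` is boolean representable: every `X ∈ H` is a transversal of the
successive differences for some chain of flats of `(V, H)`. -/
def BoolRep {α : Type u} (V : Set α) (H : Set (Set α)) : Prop :=
  ∀ X ∈ H, TransvSD V H X

lemma IsCFlat_self {α : Type u} (V : Set α) (H : Set (Set α)) : IsCFlat V H V :=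
  ⟨subset_rfl, fun _ _ _ p hp => absurd hp (by simp)⟩

lemma empty_mem_of_cpx {α : Type u} {V : Set α} {H : Set (Set α)} (h : IsCpx V H) :
    ∅ ∈ H := by
  obtain ⟨X, hX⟩ := h.2.2.1
  exact h.2.2.2.2 X hX ∅ (Set.empty_subset X)

section Part1

variable {α : Type u} {V : Set α} {H : Set (Set α)}

theorem no_three_chain (hcpx : IsCpx V H) (hbr : BoolRep V H)
    (φ : Fin 3 ≃o {F : Set α // IsCFlat V H F}) : False := by
  set A : Set α := (φ 0).1 with hAdef
  set B : Set α := (φ 1).1 with hBdef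
  set C : Set α := (φ 2).1 with hCdef
  have hA : IsCFlat V H A := (φ 0).2
  have hB : IsCFlat V H B := (φ 1).2
  have hC : IsCFlat V H C := (φ 2).2
  have hAB : A ⊂ B := by
    have := φ.strictMono (show (0 : Fin 3) < 1 by decide)
    exact this
  have hBC : B ⊂ C := by
    have := φ.strictMono (show (1 : Fin 3) < 2 by decide)
    exact this
  -- every flat is A, B or C
  have hflats : ∀ F : Set α, IsCFlat V H F → F = A ∨ F = B ∨ F = C := by
    intro F hF
    have h3 : φ.symm ⟨F, hF⟩ = 0 ∨ φ.symm ⟨F, hF⟩ = 1 ∨ φ.symm ⟨F, hF⟩ = 2 := by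
      obtain ⟨v, hv⟩ := φ.symm ⟨F, hF⟩
      interval_cases v
      · left; rfl
      · right; left; rfl
      · right; right; rfl
    have happ : φ (φ.symm ⟨F, hF⟩) = ⟨F, hF⟩ := φ.apply_symm_apply _
    rcases h3 with h | h | h <;> rw [h] at happ
    · left; rw [hAdef, happ]
    · right; left; rw [hBdef, happ]
    · right; right; rw [hCdef, happ]
  -- C = V
  have hCV : C = V := by
    rcases hflats V (IsCFlat_self V H) with h | h | h
    · exact absurd (hAB.2 (h ▸ hB.1)) (fun hf => hf)
    · exact absurd (hBC.2 (h ▸ hC.1)) (fun hf => hf)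
    · exact h.symm
  -- points
  obtain ⟨q, hqB, hqA⟩ := Set.exists_of_ssubset hAB
  obtain ⟨p, hpV, hpB⟩ := Set.exists_of_ssubset (hCV ▸ hBC)
  have hqV : q ∈ V := hB.1 hqB
  -- singletons outside A are faces
  have hsingle : ∀ r, r ∈ V → r ∉ A → {r} ∈ H := by
    intro r hrV hrA
    have := hA.2 ∅ (empty_mem_of_cpx hcpx) (Set.empty_subset A) r ⟨hrV, hrA⟩
    simpa using this
  -- D = A ∪ (V \ B) is a flat
  set D : Set α := A ∪ (V \ B) with hDdef
  have hD : IsCFlat V H D := by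
    constructor
    · exact Set.union_subset hA.1 Set.diff_subset
    · intro I hI hID r hr
      obtain ⟨hrV, hrD⟩ := hr
      have hrA : r ∉ A := fun h => hrD (Or.inl h)
      have hrB : r ∈ B := by
        by_contra hrB
        exact hrD (Or.inr ⟨hrV, hrB⟩)
      obtain ⟨k, F, x, hflat, hmono, hinj, hXeq, hx⟩ := hbr I hI
      match k, F, x, hflat, hmono, hinj, hXeq, hx with
      | 0, F, x, hflat, hmono, hinj, hXeq, hx =>
        have hIe : I = ∅ := by simpa using hXeq
        rw [hIe]
        simpa using hsingle r hrV hrA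
      | 1, F, x, hflat, hmono, hinj, hXeq, hx =>
        have hIe : I = {x 0} := by
          rw [hXeq]
          ext a
          simp only [Set.mem_range, Set.mem_singleton_iff]
          constructor
          · rintro ⟨i, rfl⟩; rw [Subsingleton.elim i 0]
          · rintro rfl; exact ⟨0, rfl⟩
        have hx0D : x 0 ∈ D := hID (hIe ▸ rfl)
        rcases hx0D with hx0A | hx0VB
        · exact hA.2 I hI (by rw [hIe]; simpa using hx0A) r ⟨hrV, hrA⟩
        · have hrH : {r} ∈ H := hsingle r hrV hrA
          have := hB.2 {r} hrH (by simpa using hrB) (x 0) hx0VB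
          have heq : insert r I = insert (x 0) {r} := by
            rw [hIe]; exact Set.pair_comm r (x 0) ▸ rfl
          rw [heq]
          exact this
      | (n + 2), F, x, hflat, hmono, hinj, hXeq, hx =>
        -- F 0 ⊂ F 1 ⊂ F 2, three flats, so F 0 = A, F 1 = B
        exfalso
        have h01 : F 0 ⊂ F 1 := hmono (show (0 : Fin (n + 3)) < 1 by
          simp [Fin.lt_def])
        have h12 : F 1 ⊂ F 2 := hmono (show (1 : Fin (n + 3)) < 2 by
          simp [Fin.lt_def, Nat.mod_eq_of_lt (show 2 < n + 3 by omega)])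
        have hF1 : F 1 = B := by
          rcases hflats (F 1) ((fun i => (hflat i)) 1) with h | h | h
          · -- F 1 = A impossible since F 0 ⊂ F 1 = A
            exfalso
            have h01' : F 0 ⊂ A := by rw [← h]; exact h01
            rcases hflats (F 0) (hflat 0) with h0 | h0 | h0
            · rw [h0] at h01'; exact (ssubset_irrefl A) h01'
            · rw [h0] at h01'; exact hAB.2 h01'.1
            · rw [h0] at h01'; exact h01'.2 (hCV ▸ hA.1)
          · exact h
          · -- F 1 = C = V impossible since F 1 ⊂ F 2 ⊆ V
            exfalso
            have h12' : C ⊂ F 2 := by rw [← h]; exact h12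
            exact h12'.2 (hCV ▸ (hflat 2).1)
        have hF0 : F 0 = A := by
          have h01' : F 0 ⊂ B := by rw [← hF1]; exact h01
          rcases hflats (F 0) (hflat 0) with h0 | h0 | h0
          · exact h0
          · rw [h0] at h01'; exact absurd h01' (ssubset_irrefl B)
          · rw [h0] at h01'; exact absurd (h01'.2 (hCV ▸ hB.1)) (fun hf => hf)
        have hx0 := hx 0
        have hsucc : (0 : Fin (n + 2)).succ = (1 : Fin (n + 3)) := rfl
        have hcast : (0 : Fin (n + 2)).castSucc = (0 : Fin (n + 3)) := rfl
        rw [hsucc, hcast, hF0, hF1] at hx0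
        have hx0D : x 0 ∈ D := hID (hXeq ▸ ⟨0, rfl⟩)
        rcases hx0D with h | h
        · exact hx0.2 h
        · exact h.2 hx0.1
  -- D must be A, B, or C; all impossible
  rcases hflats D hD with h | h | h
  · exact hpB (hAB.1 (h ▸ (Or.inr ⟨hpV, hpB⟩ : p ∈ D)))
  · exact hpB (h ▸ (Or.inr ⟨hpV, hpB⟩ : p ∈ D))
  · rcases (h ▸ (hCV ▸ hqV : q ∈ C) : q ∈ D) with hq | hq
    · exact hqA hq
    · exact hq.2 hqB

end Part1

/-- The 3-element chain is not isomorphic to the lattice of flats of any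
boolean representable finite simplicial complex, whereas every (nonempty)
lattice with at most 2 elements is isomorphic to the lattice of flats of some
boolean representable finite simplicial complex. -/
theorem stmt6 :
    (∀ (α : Type u) (V : Set α) (H : Set (Set α)), IsCpx V H → BoolRep V H →
        IsEmpty (Fin 3 ≃o {F : Set α // IsCFlat V H F})) ∧
    (∀ (L : Type u) [Lattice L] [Fintype L] [Nonempty L], Fintype.card L ≤ 2 →
        ∃ (β : Type u) (V : Set β) (H : Set (Set β)), IsCpx V H ∧ BoolRep V H ∧
          Nonempty (L ≃o {F : Set β // IsCFlat V H F})) := by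
  constructor
  · intro α V H hcpx hbr
    exact ⟨fun φ => no_three_chain hcpx hbr φ⟩
  · intro L _ _ _ hcard
    classical
    by_cases h1 : Fintype.card L ≤ 1
    · -- one-element lattice
      have hsub : Subsingleton L := Fintype.card_le_one_iff_subsingleton.mp h1
      obtain ⟨y⟩ := (inferInstance : Nonempty L)
      refine ⟨L, {y}, {∅}, ?_, ?_, ?_⟩
      · exact ⟨Set.finite_singleton y, ⟨y, rfl⟩, ⟨∅, rfl⟩,
          fun X hX => by simp_all,
          fun X hX Y hY => by simp_all [Set.subset_empty_iff]⟩
      · intro X hX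
        refine ⟨0, fun _ => {y}, Fin.elim0, ?_, ?_, ?_, ?_, fun i => i.elim0⟩
        · intro i
          exact ⟨subset_rfl, fun _ _ _ p hp => absurd hp (by simp)⟩
        · intro i j hij
          exact absurd hij (by omega)
        · intro a; exact a.elim0
        · simp_all
      · -- the only flat is {y}
        have honly : ∀ F : Set L, IsCFlat {y} {∅} F → F = {y} := by
          intro F hF
          rcases Set.subset_singleton_iff_eq.mp hF.1 with h | h
          · exfalso
            have := hF.2 ∅ rfl (by simp [h]) y ⟨rfl, by simp [h]⟩
            simp at this
          · exact h
        refine ⟨⟨⟨fun _ => ⟨{y}, IsCFlat_self _ _⟩, fun _ => y, ?_, ?_⟩, ?_⟩⟩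
        · intro z; exact Subsingleton.elim _ _
        · intro F; exact (Subtype.ext (honly F.1 F.2)).symm
        · intro a b
          simp only [Equiv.coe_fn_mk, le_refl, true_iff]
          rw [Subsingleton.elim a b]
    · -- two-element lattice
      have hc2 : Fintype.card L = 2 := by omega
      have hc2' : Nat.card L = 2 := by rw [Nat.card_eq_fintype_card]; exact hc2
      obtain ⟨a, b, hab, huniv⟩ := Nat.card_eq_two_iff.mp hc2'
      have helts : ∀ z : L, z = a ∨ z = b := by
        intro z
        have : z ∈ ({a, b} : Set L) := huniv.symm ▸ Set.mem_univ z
        simpa using this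
      -- get x < y
      obtain ⟨x, y, hxy, hmem⟩ : ∃ x y : L, x < y ∧ ∀ z : L, z = x ∨ z = y := by
        rcases helts (a ⊓ b) with h | h
        · exact ⟨a, b, lt_of_le_of_ne (h ▸ inf_le_right) hab, helts⟩
        · refine ⟨b, a, lt_of_le_of_ne (h ▸ inf_le_left) (Ne.symm hab), ?_⟩
          intro z; exact (helts z).symm
      refine ⟨L, {y}, {X | X ⊆ ({y} : Set L)}, ?_, ?_, ?_⟩
      · exact ⟨Set.finite_singleton y, ⟨y, rfl⟩, ⟨∅, Set.empty_subset _⟩,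
          fun X hX => hX, fun X hX Y hY => hY.trans hX⟩
      · -- boolean representability
        have hlt : (∅ : Set L) < ({y} : Set L) := by
          rw [lt_iff_le_and_ne]
          exact ⟨Set.empty_subset _, (Set.singleton_ne_empty y).symm⟩
        have hflat : ∀ F : Set L, F ⊆ {y} → IsCFlat {y} {X | X ⊆ ({y} : Set L)} F := by
          intro F hF
          refine ⟨hF, fun I hI hIF p hp => ?_⟩
          exact Set.insert_subset hp.1 hI
        intro X hX
        rcases Set.subset_singleton_iff_eq.mp hX with h | h
        · refine ⟨0, fun _ => ∅, Fin.elim0, fun i => hflat ∅ (Set.empty_subset _),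
            ?_, fun a => a.elim0, ?_, fun i => i.elim0⟩
          · intro i j hij; exact absurd hij (by omega)
          · simp [h]
        · refine ⟨1, fun i => if i = 0 then ∅ else {y}, fun _ => y,
            ?_, ?_, ?_, ?_, ?_⟩
          · intro i
            dsimp only
            by_cases hi : i = 0
            · rw [if_pos hi]
              exact hflat ∅ (Set.empty_subset _)
            · rw [if_neg hi]
              exact hflat {y} subset_rfl
          · intro i j hij
            rcases i with ⟨iv, hiv⟩
            rcases j with ⟨jv, hjv⟩
            rw [Fin.mk_lt_mk] at hij
            interval_cases iv <;> interval_cases jv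
            simp [Fin.ext_iff, hlt]
          · intro i j _; exact Subsingleton.elim i j
          · rw [h]
            exact (Set.range_const).symm
          · intro i
            have hi : i = 0 := Subsingleton.elim i 0
            subst hi
            refine ⟨?_, ?_⟩
            · simp [show ((0 : Fin 1).succ : Fin 2) = 1 from rfl]
            · simp [show ((0 : Fin 1).castSucc : Fin 2) = 0 from rfl]
      · -- order isomorphism
        have hflat : ∀ F : Set L, F ⊆ {y} → IsCFlat {y} {X | X ⊆ ({y} : Set L)} F := by
          intro F hF
          refine ⟨hF, fun I hI hIF p hp => ?_⟩
          exact Set.insert_subset hp.1 hI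
        have honly : ∀ F : Set L, IsCFlat {y} {X | X ⊆ ({y} : Set L)} F →
            F = ∅ ∨ F = {y} := fun F hF => Set.subset_singleton_iff_eq.mp hF.1
        have hyx : y ≠ x := (ne_of_lt hxy).symm
        refine ⟨⟨⟨fun z => if z = x then ⟨∅, hflat ∅ (Set.empty_subset _)⟩
            else ⟨{y}, hflat {y} subset_rfl⟩,
          fun F => if F.1 = ∅ then x else y, ?_, ?_⟩, ?_⟩⟩
        · intro z
          rcases hmem z with rfl | rfl
          · simp
          · simp [hyx]
        · intro F
          dsimp only
          rcases honly F.1 F.2 with h | h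
          · rw [if_pos h, if_pos rfl]
            exact Subtype.ext h.symm
          · have hne : F.1 ≠ ∅ := by rw [h]; exact Set.singleton_ne_empty y
            rw [if_neg hne, if_neg hyx]
            exact Subtype.ext h.symm
        · intro s t
          rcases hmem s with rfl | rfl <;> rcases hmem t with rfl | rfl
          · simp
          · simp [hyx, le_of_lt hxy]
          · simp [hyx]
            exact hxy.not_ge
          · simp [hyx]
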